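/- Let V be a vector superspace with even non-degenerate supersymmetric form g and compatible complex structure J as in the Kähler super setting, u = { ξ ∈ osp(V,g) : [ξ,J] = 0 }, and su = { ξ ∈ u : str(J ∘ ξ) = 0 }. Then an even algebraic curvature tensor R ∈ R(u) takes values in su if and only if Ric(R) = 0, where Ric(R)(Y,Z) = str( X ↦ (−1)^{|X||Z|} R(Y,X)Z ). -/

import Mathlib

/-- A vector superspace structure on `V`: a pair of complementary subspaces. -/
structure SuperSpace (k V : Type*) [Field k] [AddCommGroup V] [Module k V] where
  even : Submodule k V
  odd : Submodule k V
  isCompl : IsCompl even odd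

variable {k V : Type*} [Field k] [AddCommGroup V] [Module k V]

/-- The subspace of elements of parity `p`. -/
def SuperSpace.part (S : SuperSpace k V) (p : ZMod 2) : Submodule k V :=
  if p = 0 then S.even else S.odd

/-- The sign `(-1)^p`. -/
def sg (k : Type*) [Field k] (p : ZMod 2) : k := if p = 1 then -1 else 1

/-- `A` is a homogeneous endomorphism of parity `p`. -/
def SuperSpace.HomEnd (S : SuperSpace k V) (p : ZMod 2) (A : Module.End k V) : Prop :=
  ∀ q x, x ∈ S.part q → A x ∈ S.part (q + p)

/-- Supercommutator of endomorphisms of parities `pa`, `pb`. -/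
def sbr (pa pb : ZMod 2) (A B : Module.End k V) : Module.End k V :=
  A * B - sg k (pa * pb) • (B * A)

/-- Super skew-symmetry of a bilinear map with operator values. -/
def SuperSkew (S : SuperSpace k V) (R : V →ₗ[k] V →ₗ[k] Module.End k V) : Prop :=
  ∀ p q x y, x ∈ S.part p → y ∈ S.part q → R x y = - sg k (p * q) • R y x

/-- The first Bianchi super-identity. -/
def Bianchi (S : SuperSpace k V) (R : V →ₗ[k] V →ₗ[k] Module.End k V) : Prop :=
  ∀ p q r x y z, x ∈ S.part p → y ∈ S.part q → z ∈ S.part r →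
    R x y z + sg k (p * (q + r)) • R y z x + sg k (r * (p + q)) • R z x y = 0

/-- `R` is an algebraic curvature tensor of type `g`. -/
def CurvOf (S : SuperSpace k V) (g : Submodule k (Module.End k V))
    (R : V →ₗ[k] V →ₗ[k] Module.End k V) : Prop :=
  (∀ x y, R x y ∈ g) ∧ SuperSkew S R ∧ Bianchi S R

/-- `R` is homogeneous of parity `pR`: `R x y` has parity `pR + |x| + |y|`. -/
def HomCurv (S : SuperSpace k V) (pR : ZMod 2)
    (R : V →ₗ[k] V →ₗ[k] Module.End k V) : Prop :=
  ∀ p q x y, x ∈ S.part p → y ∈ S.part q → S.HomEnd (pR + p + q) (R x y)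

/-- The supertrace of an endomorphism with respect to a superspace structure. -/
noncomputable def strE {k V : Type*} [Field k] [AddCommGroup V] [Module k V]
    (S : SuperSpace k V) (A : Module.End k V) : k :=
  LinearMap.trace k S.even
      ((Submodule.linearProjOfIsCompl S.even S.odd S.isCompl) ∘ₗ A ∘ₗ S.even.subtype) -
    LinearMap.trace k S.odd
      ((Submodule.linearProjOfIsCompl S.odd S.even S.isCompl.symm) ∘ₗ A ∘ₗ S.odd.subtype)

/-- The endomorphism which is the identity on the even part and `c` times the identity on
the odd part.  For `c = (-1)^{|Z|}` it implements the Koszul sign `(-1)^{|X||Z|}`. -/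
noncomputable def twist {k V : Type*} [Field k] [AddCommGroup V] [Module k V]
    (S : SuperSpace k V) (c : k) : Module.End k V :=
  S.even.subtype ∘ₗ Submodule.linearProjOfIsCompl S.even S.odd S.isCompl +
    c • (S.odd.subtype ∘ₗ Submodule.linearProjOfIsCompl S.odd S.even S.isCompl.symm)

/-- `ξ` belongs to `osp(V,g)` as an element of parity `pξ`:
`g(ξX,Y) + (−1)^{|ξ||X|} g(X,ξY) = 0`. -/
def ospCond {k V : Type*} [Field k] [AddCommGroup V] [Module k V]
    (S : SuperSpace k V) (B : V →ₗ[k] V →ₗ[k] k) (pξ : ZMod 2)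
    (ξ : Module.End k V) : Prop :=
  ∀ (p : ZMod 2) (x y : V), x ∈ S.part p → B (ξ x) y + sg k (pξ * p) * B x (ξ y) = 0

section Aux

variable {k V : Type*} [Field k] [AddCommGroup V] [Module k V]

lemma zmod2_cases : ∀ p : ZMod 2, p = 0 ∨ p = 1 := by decide

lemma sg_zero : sg k 0 = 1 := by simp [sg]

lemma sg_one : sg k 1 = -1 := by simp [sg]

lemma part_zero (S : SuperSpace k V) : S.part 0 = S.even := if_pos rfl

lemma part_one (S : SuperSpace k V) : S.part 1 = S.odd := if_neg (by decide)

lemma part_decomp (S : SuperSpace k V) (v : V) :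
    ∃ ve ∈ S.even, ∃ vo ∈ S.odd, v = ve + vo :=
  ⟨_, SetLike.coe_mem _, _, SetLike.coe_mem _,
    (Submodule.projection_add_projection_eq_self S.isCompl v).symm⟩

lemma block {S : SuperSpace k V} {B : V →ₗ[k] V →ₗ[k] k}
    (hBeven : (∀ x ∈ S.even, ∀ y ∈ S.odd, B x y = 0) ∧
      (∀ x ∈ S.odd, ∀ y ∈ S.even, B x y = 0))
    {p q : ZMod 2} {x y : V} (hx : x ∈ S.part p) (hy : y ∈ S.part q)
    (hpq : p ≠ q) : B x y = 0 := by
  rcases zmod2_cases p with rfl | rfl <;> rcases zmod2_cases q with rfl | rfl <;>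
    simp only [part_zero, part_one] at hx hy
  · exact absurd rfl hpq
  · exact hBeven.1 x hx y hy
  · exact hBeven.2 x hx y hy
  · exact absurd rfl hpq

lemma sepR {S : SuperSpace k V} {B : V →ₗ[k] V →ₗ[k] k}
    (hsymm : ∀ (p q : ZMod 2) (x y : V), x ∈ S.part p → y ∈ S.part q →
      B x y = sg k (p * q) * B y x)
    (hBeven : (∀ x ∈ S.even, ∀ y ∈ S.odd, B x y = 0) ∧
      (∀ x ∈ S.odd, ∀ y ∈ S.even, B x y = 0))
    (hnd : ∀ x : V, (∀ y, B x y = 0) → x = 0) :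
    ∀ y : V, (∀ x, B x y = 0) → y = 0 := by
  intro y hy
  obtain ⟨ye, hye, yo, hyo, rfl⟩ := part_decomp S y
  have hye' : ye ∈ S.part 0 := by rwa [part_zero]
  have hyo' : yo ∈ S.part 1 := by rwa [part_one]
  have he : ∀ x, B x ye = 0 := by
    intro x
    obtain ⟨xe, hxe, xo, hxo, rfl⟩ := part_decomp S x
    have hxe' : xe ∈ S.part 0 := by rwa [part_zero]
    have hxo' : xo ∈ S.part 1 := by rwa [part_one]
    have h1 : B xe ye + B xe yo = 0 := by
      have := hy xe; rwa [map_add] at this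
    have h2 : B xe yo = 0 := block hBeven hxe' hyo' (by decide)
    have h3 : B xo ye = 0 := block hBeven hxo' hye' (by decide)
    simp only [map_add, LinearMap.add_apply]
    rw [h3]
    linear_combination h1 - h2
  have ho : ∀ x, B x yo = 0 := by
    intro x
    obtain ⟨xe, hxe, xo, hxo, rfl⟩ := part_decomp S x
    have hxe' : xe ∈ S.part 0 := by rwa [part_zero]
    have hxo' : xo ∈ S.part 1 := by rwa [part_one]
    have h1 : B xo ye + B xo yo = 0 := by
      have := hy xo; rwa [map_add] at this
    have h2 : B xo ye = 0 := block hBeven hxo' hye' (by decide)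
    have h3 : B xe yo = 0 := block hBeven hxe' hyo' (by decide)
    simp only [map_add, LinearMap.add_apply]
    rw [h3]
    linear_combination h1 - h2
  have hze : ye = 0 := by
    apply hnd
    intro z
    obtain ⟨ze, hze, zo, hzo, rfl⟩ := part_decomp S z
    have hze' : ze ∈ S.part 0 := by rwa [part_zero]
    have hzo' : zo ∈ S.part 1 := by rwa [part_one]
    rw [map_add, hsymm 0 0 ye ze hye' hze', he ze,
      block hBeven hye' hzo' (by decide)]
    simp
  have hzo : yo = 0 := by
    apply hnd
    intro z
    obtain ⟨ze, hze, zo, hzo, rfl⟩ := part_decomp S z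
    have hze' : ze ∈ S.part 0 := by rwa [part_zero]
    have hzo' : zo ∈ S.part 1 := by rwa [part_one]
    rw [map_add, hsymm 1 1 yo zo hyo' hzo', ho zo,
      block hBeven hyo' hze' (by decide)]
    simp
  rw [hze, hzo, add_zero]
lemma sum_swap {ι : Type*} [Fintype ι] [DecidableEq ι] (B : V →ₗ[k] V →ₗ[k] k)
    (Φ : V →ₗ[k] V →ₗ[k] k) (b d b' d' : ι → V)
    (hcomp : ∀ v, v = ∑ j, B v (d j) • b j)
    (hdual' : ∀ i j, B (b' j) (d' i) = if j = i then 1 else 0)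
    (hdet : ∀ u : V, (∀ j, B (b' j) u = 0) → u = 0) :
    ∑ i, Φ (b' i) (d' i) = ∑ i, Φ (b i) (d i) := by
  have key : ∀ j, (∑ i, B (b' i) (d j) • d' i) = d j := by
    intro j
    have h : ∀ m, B (b' m) ((∑ i, B (b' i) (d j) • d' i) - d j) = 0 := by
      intro m
      rw [map_sub, map_sum]
      simp only [map_smul, smul_eq_mul, hdual', mul_ite, mul_one, mul_zero]
      rw [Finset.sum_ite_eq Finset.univ m (fun i => B (b' i) (d j))]
      simp
    have := hdet _ h
    exact (sub_eq_zero.mp this)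
  calc ∑ i, Φ (b' i) (d' i)
      = ∑ i, Φ (∑ j, B (b' i) (d j) • b j) (d' i) := by
        apply Finset.sum_congr rfl; intro i _; rw [← hcomp (b' i)]
    _ = ∑ i, ∑ j, B (b' i) (d j) * Φ (b j) (d' i) := by
        apply Finset.sum_congr rfl; intro i _
        rw [map_sum]
        simp only [map_smul, LinearMap.sum_apply, LinearMap.smul_apply, smul_eq_mul]
    _ = ∑ j, Φ (b j) (∑ i, B (b' i) (d j) • d' i) := by
        rw [Finset.sum_comm]
        apply Finset.sum_congr rfl; intro j _
        rw [map_sum]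
        simp only [map_smul, smul_eq_mul]
    _ = ∑ j, Φ (b j) (d j) := by simp_rw [key]
lemma twist_apply_even (S : SuperSpace k V) (c : k) {v : V} (hv : v ∈ S.even) :
    twist S c v = v := by
  simp only [twist, LinearMap.add_apply, LinearMap.smul_apply, LinearMap.comp_apply]
  rw [show Submodule.linearProjOfIsCompl S.even S.odd S.isCompl v
      = ⟨v, hv⟩ from Submodule.linearProjOfIsCompl_apply_left S.isCompl ⟨v, hv⟩,
    show Submodule.linearProjOfIsCompl S.odd S.even S.isCompl.symm v = 0 from
      Submodule.projectionOnto_apply_of_mem_right S.isCompl.symm hv]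
  simp

lemma twist_apply_odd (S : SuperSpace k V) (c : k) {v : V} (hv : v ∈ S.odd) :
    twist S c v = c • v := by
  simp only [twist, LinearMap.add_apply, LinearMap.smul_apply, LinearMap.comp_apply]
  rw [show Submodule.linearProjOfIsCompl S.odd S.even S.isCompl.symm v
      = ⟨v, hv⟩ from Submodule.linearProjOfIsCompl_apply_left S.isCompl.symm ⟨v, hv⟩,
    show Submodule.linearProjOfIsCompl S.even S.odd S.isCompl v = 0 from
      Submodule.projectionOnto_apply_of_mem_right S.isCompl hv]
  simp

lemma exists_dualsys [FiniteDimensional k V] (S : SuperSpace k V)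
    (B : V →ₗ[k] V →ₗ[k] k)
    (hsymm : ∀ (p q : ZMod 2) (x y : V), x ∈ S.part p → y ∈ S.part q →
      B x y = sg k (p * q) * B y x)
    (hBeven : (∀ x ∈ S.even, ∀ y ∈ S.odd, B x y = 0) ∧
      (∀ x ∈ S.odd, ∀ y ∈ S.even, B x y = 0))
    (hnd : ∀ x : V, (∀ y, B x y = 0) → x = 0) :
    ∃ (ι : Type) (_ : Fintype ι) (b d : ι → V) (π : ι → ZMod 2),
      (∀ i, b i ∈ S.part (π i)) ∧ (∀ i, d i ∈ S.part (π i)) ∧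
      (∀ i, B (b i) (d i) = 1) ∧
      (∀ i j, i ≠ j → B (b j) (d i) = 0) ∧
      (∀ v : V, v = ∑ j, B v (d j) • b j) ∧
      (∀ u : V, (∀ j, B (d j) u = 0) → u = 0) ∧
      (∀ M : Module.End k V, strE S M = ∑ i, sg k (π i) * B (M (b i)) (d i)) := by
  classical
  set pe := Submodule.linearProjOfIsCompl S.even S.odd S.isCompl with hpe
  set po := Submodule.linearProjOfIsCompl S.odd S.even S.isCompl.symm with hpo
  have hsum : ∀ v : V, (↑(pe v) + ↑(po v) : V) = v := fun v =>
    Submodule.projection_add_projection_eq_self S.isCompl v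
  -- even block
  let bE : Module.Basis (Fin (Module.finrank k S.even)) k S.even := Module.finBasis k S.even
  let Be : (↥S.even) →ₗ[k] (↥S.even) →ₗ[k] k := B.compl₁₂ S.even.subtype S.even.subtype
  have hBe : ∀ u v : ↥S.even, Be u v = B ↑u ↑v := fun u v => rfl
  have hBeflip : LinearMap.BilinForm.Nondegenerate Be.flip := by
    refine ⟨?_, ?_⟩
    · intro u hu
      rw [← Submodule.coe_eq_zero]
      apply sepR hsymm hBeven hnd
      intro x
      obtain ⟨xe, hxe, xo, hxo, rfl⟩ := part_decomp S x
      rw [map_add, LinearMap.add_apply]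
      have h1 : B xe ↑u = 0 := hu ⟨xe, hxe⟩
      have h2 : B xo ↑u = 0 := block hBeven (by rwa [part_one]) (by
        rw [part_zero]; exact u.2) (by decide)
      rw [h1, h2, add_zero]
    · intro u hu
      rw [← Submodule.coe_eq_zero]
      apply hnd
      intro x
      obtain ⟨xe, hxe, xo, hxo, rfl⟩ := part_decomp S x
      rw [map_add]
      have h1 : B ↑u xe = 0 := hu ⟨xe, hxe⟩
      have h2 : B ↑u xo = 0 := block hBeven (by rw [part_zero]; exact u.2)
        (by rwa [part_one]) (by decide)
      rw [h1, h2, add_zero]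
  let dBe := LinearMap.BilinForm.dualBasis Be.flip hBeflip bE
  let dE : Fin (Module.finrank k S.even) → V := fun i => ↑(dBe i)
  have hdualE : ∀ i j, B ↑(bE j) (dE i) = if j = i then 1 else 0 := by
    intro i j
    have := LinearMap.BilinForm.apply_dualBasis_left hBeflip bE i j
    rw [LinearMap.flip_apply, hBe] at this
    exact this
  have hreprE : ∀ (u : ↥S.even) i, B ↑u (dE i) = bE.repr u i := by
    intro u i
    conv_lhs => rw [← bE.sum_repr u]
    rw [Submodule.coe_sum]
    simp only [SetLike.val_smul, map_sum, map_smul, LinearMap.sum_apply,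
      LinearMap.smul_apply, smul_eq_mul, hdualE, mul_ite, mul_one, mul_zero]
    simp
  -- odd block
  let bO : Module.Basis (Fin (Module.finrank k S.odd)) k S.odd := Module.finBasis k S.odd
  let Bo : (↥S.odd) →ₗ[k] (↥S.odd) →ₗ[k] k := B.compl₁₂ S.odd.subtype S.odd.subtype
  have hBo : ∀ u v : ↥S.odd, Bo u v = B ↑u ↑v := fun u v => rfl
  have hBoflip : LinearMap.BilinForm.Nondegenerate Bo.flip := by
    refine ⟨?_, ?_⟩
    · intro u hu
      rw [← Submodule.coe_eq_zero]
      apply sepR hsymm hBeven hnd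
      intro x
      obtain ⟨xe, hxe, xo, hxo, rfl⟩ := part_decomp S x
      rw [map_add, LinearMap.add_apply]
      have h1 : B xo ↑u = 0 := hu ⟨xo, hxo⟩
      have h2 : B xe ↑u = 0 := block hBeven (by rwa [part_zero]) (by
        rw [part_one]; exact u.2) (by decide)
      rw [h1, h2, zero_add]
    · intro u hu
      rw [← Submodule.coe_eq_zero]
      apply hnd
      intro x
      obtain ⟨xe, hxe, xo, hxo, rfl⟩ := part_decomp S x
      rw [map_add]
      have h1 : B ↑u xo = 0 := hu ⟨xo, hxo⟩
      have h2 : B ↑u xe = 0 := block hBeven (by rw [part_one]; exact u.2)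
        (by rwa [part_zero]) (by decide)
      rw [h1, h2, zero_add]
  let dBo := LinearMap.BilinForm.dualBasis Bo.flip hBoflip bO
  let dO : Fin (Module.finrank k S.odd) → V := fun i => ↑(dBo i)
  have hdualO : ∀ i j, B ↑(bO j) (dO i) = if j = i then 1 else 0 := by
    intro i j
    have := LinearMap.BilinForm.apply_dualBasis_left hBoflip bO i j
    rw [LinearMap.flip_apply, hBo] at this
    exact this
  have hreprO : ∀ (u : ↥S.odd) i, B ↑u (dO i) = bO.repr u i := by
    intro u i
    conv_lhs => rw [← bO.sum_repr u]
    rw [Submodule.coe_sum]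
    simp only [SetLike.val_smul, map_sum, map_smul, LinearMap.sum_apply,
      LinearMap.smul_apply, smul_eq_mul, hdualO, mul_ite, mul_one, mul_zero]
    simp
  -- extend repr to all of V
  have hreprE' : ∀ (w : V) i, B w (dE i) = bE.repr (pe w) i := by
    intro w i
    conv_lhs => rw [← hsum w]
    rw [map_add, LinearMap.add_apply]
    have h2 : B ↑(po w) (dE i) = 0 := block hBeven
      (by rw [part_one]; exact (po w).2) (by rw [part_zero]; exact (dBe i).2)
      (by decide)
    rw [h2, add_zero, hreprE]
  have hreprO' : ∀ (w : V) i, B w (dO i) = bO.repr (po w) i := by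
    intro w i
    conv_lhs => rw [← hsum w]
    rw [map_add, LinearMap.add_apply]
    have h2 : B ↑(pe w) (dO i) = 0 := block hBeven
      (by rw [part_zero]; exact (pe w).2) (by rw [part_one]; exact (dBo i).2)
      (by decide)
    rw [h2, zero_add, hreprO]
  -- assemble
  refine ⟨Fin (Module.finrank k S.even) ⊕ Fin (Module.finrank k S.odd), inferInstance,
    Sum.elim (fun i => ↑(bE i)) (fun i => ↑(bO i)),
    Sum.elim dE dO, Sum.elim (fun _ => 0) (fun _ => 1), ?_, ?_, ?_, ?_, ?_, ?_, ?_⟩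
  · rintro (i | i)
    · simp only [Sum.elim_inl]; rw [part_zero]; exact (bE i).2
    · simp only [Sum.elim_inr]; rw [part_one]; exact (bO i).2
  · rintro (i | i)
    · simp only [Sum.elim_inl]; rw [part_zero]; exact (dBe i).2
    · simp only [Sum.elim_inr]; rw [part_one]; exact (dBo i).2
  · rintro (i | i)
    · simpa using hdualE i i
    · simpa using hdualO i i
  · rintro (i | i) (j | j) hij
    · have hij' : i ≠ j := fun h => hij (by rw [h])
      have := hdualE i j
      rw [if_neg (fun h => hij' h.symm)] at this
      simpa using this
    · simp only [Sum.elim_inl, Sum.elim_inr]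
      exact block hBeven (p := 1) (q := 0) (by rw [part_one]; exact (bO j).2)
        (by rw [part_zero]; exact (dBe i).2) (by decide)
    · simp only [Sum.elim_inl, Sum.elim_inr]
      exact block hBeven (p := 0) (q := 1) (by rw [part_zero]; exact (bE j).2)
        (by rw [part_one]; exact (dBo i).2) (by decide)
    · have hij' : i ≠ j := fun h => hij (by rw [h])
      have := hdualO i j
      rw [if_neg (fun h => hij' h.symm)] at this
      simpa using this
  · intro v
    rw [Fintype.sum_sum_type]
    simp only [Sum.elim_inl, Sum.elim_inr]
    have he : ∑ i, B v (dE i) • (↑(bE i) : V) = ↑(pe v) := by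
      have := congrArg (S.even.subtype) (bE.sum_repr (pe v))
      rw [map_sum] at this
      simpa [hreprE' v] using this
    have ho : ∑ i, B v (dO i) • (↑(bO i) : V) = ↑(po v) := by
      have := congrArg (S.odd.subtype) (bO.sum_repr (po v))
      rw [map_sum] at this
      simpa [hreprO' v] using this
    rw [he, ho, hsum]
  · intro u hu
    have hpeu : pe u = 0 := by
      have : ∀ i, bE.repr (pe u) i = 0 := by
        intro i
        rw [← hreprE' u i]
        have h0 := hu (Sum.inl i)
        simp only [Sum.elim_inl] at h0
        -- B (dE i) u = 0 ; need B u (dE i) = 0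
        conv_lhs => rw [← hsum u]
        rw [map_add, LinearMap.add_apply]
        have h2 : B ↑(po u) (dE i) = 0 := block hBeven
          (by rw [part_one]; exact (po u).2) (by rw [part_zero]; exact (dBe i).2)
          (by decide)
        have h1 : B ↑(pe u) (dE i) = 0 := by
          rw [hsymm 0 0 _ _ (by rw [part_zero]; exact (pe u).2)
            (by rw [part_zero]; exact (dBe i).2)]
          have h3 : B (dE i) ↑(pe u) = 0 := by
            have h4 : B (dE i) ↑(po u) = 0 := block hBeven (p := 0) (q := 1)
              (by rw [part_zero]; exact (dBe i).2) (by rw [part_one]; exact (po u).2)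
              (by decide)
            conv_rhs => rw [← h0]
            conv_rhs => rw [← hsum u]
            rw [map_add, h4, add_zero]
          rw [h3, mul_zero]
        rw [h1, h2, add_zero]
      have h0 : bE.repr (pe u) = 0 := Finsupp.ext this
      exact (LinearEquiv.map_eq_zero_iff _).mp h0
    have hpou : po u = 0 := by
      have : ∀ i, bO.repr (po u) i = 0 := by
        intro i
        rw [← hreprO' u i]
        have h0 := hu (Sum.inr i)
        simp only [Sum.elim_inr] at h0
        conv_lhs => rw [← hsum u]
        rw [map_add, LinearMap.add_apply]
        have h2 : B ↑(pe u) (dO i) = 0 := block hBeven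
          (by rw [part_zero]; exact (pe u).2) (by rw [part_one]; exact (dBo i).2)
          (by decide)
        have h1 : B ↑(po u) (dO i) = 0 := by
          rw [hsymm 1 1 _ _ (by rw [part_one]; exact (po u).2)
            (by rw [part_one]; exact (dBo i).2)]
          have h3 : B (dO i) ↑(po u) = 0 := by
            have h4 : B (dO i) ↑(pe u) = 0 := block hBeven (p := 1) (q := 0)
              (by rw [part_one]; exact (dBo i).2) (by rw [part_zero]; exact (pe u).2)
              (by decide)
            conv_rhs => rw [← h0]
            conv_rhs => rw [← hsum u]
            rw [map_add, h4, zero_add]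
          rw [h3, mul_zero]
        rw [h1, h2, zero_add]
      have h0 : bO.repr (po u) = 0 := Finsupp.ext this
      exact (LinearEquiv.map_eq_zero_iff _).mp h0
    rw [← hsum u, hpeu, hpou]
    simp
  · intro M
    rw [strE, ← hpe, ← hpo]
    have te : LinearMap.trace k S.even (pe ∘ₗ M ∘ₗ S.even.subtype)
        = ∑ i, B (M ↑(bE i)) (dE i) := by
      rw [LinearMap.trace_eq_matrix_trace k bE, Matrix.trace]
      apply Finset.sum_congr rfl
      intro i _
      rw [Matrix.diag_apply, LinearMap.toMatrix_apply, LinearMap.comp_apply,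
        LinearMap.comp_apply, Submodule.subtype_apply, hreprE']
    have toO : LinearMap.trace k S.odd (po ∘ₗ M ∘ₗ S.odd.subtype)
        = ∑ i, B (M ↑(bO i)) (dO i) := by
      rw [LinearMap.trace_eq_matrix_trace k bO, Matrix.trace]
      apply Finset.sum_congr rfl
      intro i _
      rw [Matrix.diag_apply, LinearMap.toMatrix_apply, LinearMap.comp_apply,
        LinearMap.comp_apply, Submodule.subtype_apply, hreprO']
    rw [te, toO, Fintype.sum_sum_type]
    simp only [Sum.elim_inl, Sum.elim_inr, sg_zero, sg_one, one_mul, neg_one_mul]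
    rw [sub_eq_add_neg, ← Finset.sum_neg_distrib]
lemma q2pair (S : SuperSpace k V) (B : V →ₗ[k] V →ₗ[k] k)
    (R : V →ₗ[k] V →ₗ[k] Module.End k V) (hskew : SuperSkew S R)
    {p q : ZMod 2} {x y : V} (hx : x ∈ S.part p) (hy : y ∈ S.part q) (z w : V) :
    B (R x y z) w = -(sg k (p * q) * B (R y x z) w) := by
  rw [hskew p q x y hx hy]
  simp only [LinearMap.neg_apply, LinearMap.smul_apply, map_neg, map_smul,
    smul_eq_mul]
  ring

lemma q1pair (S : SuperSpace k V) (B : V →ₗ[k] V →ₗ[k] k)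
    (hsymm : ∀ (p q : ZMod 2) (x y : V), x ∈ S.part p → y ∈ S.part q →
      B x y = sg k (p * q) * B y x)
    (R : V →ₗ[k] V →ₗ[k] Module.End k V) (hRhom : HomCurv S 0 R)
    {p q r s : ZMod 2} {x y z w : V} (hosp : ospCond S B (p + q) (R x y))
    (hx : x ∈ S.part p) (hy : y ∈ S.part q) (hz : z ∈ S.part r) (hw : w ∈ S.part s) :
    B (R x y z) w = -(sg k ((p + q) * r) *
      (sg k (r * (s + (0 + p + q))) * B (R x y w) z)) := by
  have h1 := hosp r z w hz
  have hmem : R x y w ∈ S.part (s + (0 + p + q)) := hRhom p q x y hx hy s w hw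
  have h2 := hsymm r (s + (0 + p + q)) z (R x y w) hz hmem
  rw [h2] at h1
  linear_combination h1

lemma b1pair (S : SuperSpace k V) (B : V →ₗ[k] V →ₗ[k] k)
    (R : V →ₗ[k] V →ₗ[k] Module.End k V) (hB : Bianchi S R)
    {p q r : ZMod 2} {x y z : V}
    (hx : x ∈ S.part p) (hy : y ∈ S.part q) (hz : z ∈ S.part r) (w : V) :
    B (R x y z) w + sg k (p * (q + r)) * B (R y z x) w
      + sg k (r * (p + q)) * B (R z x y) w = 0 := by
  have h := hB p q r x y z hx hy hz
  have h' := congrArg (fun v => B v w) h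
  simpa only [map_add, map_smul, LinearMap.add_apply, LinearMap.smul_apply,
    smul_eq_mul, map_zero, LinearMap.zero_apply] using h'
set_option maxHeartbeats 2000000 in
lemma pairsym (h2 : (2 : k) ≠ 0) (S : SuperSpace k V) (B : V →ₗ[k] V →ₗ[k] k)
    (hsymm : ∀ (p q : ZMod 2) (x y : V), x ∈ S.part p → y ∈ S.part q →
      B x y = sg k (p * q) * B y x)
    (hBeven : (∀ x ∈ S.even, ∀ y ∈ S.odd, B x y = 0) ∧
      (∀ x ∈ S.odd, ∀ y ∈ S.even, B x y = 0))
    (R : V →ₗ[k] V →ₗ[k] Module.End k V)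
    (hskew : SuperSkew S R) (hB : Bianchi S R) (hRhom : HomCurv S 0 R)
    (hosp : ∀ (p q : ZMod 2) (x y : V), x ∈ S.part p → y ∈ S.part q →
      ospCond S B (p + q) (R x y))
    {px py pz pw : ZMod 2} {x y z w : V}
    (hx : x ∈ S.part px) (hy : y ∈ S.part py) (hz : z ∈ S.part pz)
    (hw : w ∈ S.part pw) :
    B (R x y z) w = sg k ((px + py) * (pz + pw)) * B (R z w x) y := by
  have hb1 := b1pair S B R hB hx hy hz w
  have hb2 := b1pair S B R hB hx hz hw y
  have hb3 := b1pair S B R hB hx hw hy z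
  have hb4 := b1pair S B R hB hy hz hw x
  have hq1a := q1pair S B hsymm R hRhom (hosp _ _ _ _ hx hz) hx hz hy hw
  have hq1b := q1pair S B hsymm R hRhom (hosp _ _ _ _ hy hx) hy hx hz hw
  have hq1c := q1pair S B hsymm R hRhom (hosp _ _ _ _ hy hz) hy hz hx hw
  have hq1d := q1pair S B hsymm R hRhom (hosp _ _ _ _ hz hw) hz hw hx hy
  have hq1e := q1pair S B hsymm R hRhom (hosp _ _ _ _ hw hx) hw hx hy hz
  have hq1f := q1pair S B hsymm R hRhom (hosp _ _ _ _ hw hy) hw hy hx hz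
  have hq2a := q2pair S B R hskew hx hy z w
  have hq2b := q2pair S B R hskew hx hz y w
  have hq2c := q2pair S B R hskew hx hw y z
  rcases zmod2_cases px with rfl | rfl <;> rcases zmod2_cases py with rfl | rfl <;>
    rcases zmod2_cases pz with rfl | rfl <;> rcases zmod2_cases pw with rfl | rfl
  · -- case (0, 0, 0, 0)
    simp only [show ((1:ZMod 2)+1) = 0 from rfl, zero_add, add_zero, mul_zero, zero_mul, mul_one, one_mul, sg_zero, sg_one] at hb1 hb2 hb3 hb4 hq1a hq1b hq1c hq1d hq1e hq1f hq2a hq2b hq2c ⊢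
    apply mul_left_cancel₀ h2
    linear_combination hb1 - hb2 + hb3 + hb4 + hq1a - hq1b - hq1c - hq1d + hq1e - hq1f + hq2a - hq2b - hq2c
  · -- case (0, 0, 0, 1)
    rw [block hBeven (hRhom _ _ x y hx hy _ z hz) hw (by decide),
      block hBeven (hRhom _ _ z w hz hw _ x hx) hy (by decide)]
    ring
  · -- case (0, 0, 1, 0)
    rw [block hBeven (hRhom _ _ x y hx hy _ z hz) hw (by decide),
      block hBeven (hRhom _ _ z w hz hw _ x hx) hy (by decide)]
    ring
  · -- case (0, 0, 1, 1)
    simp only [show ((1:ZMod 2)+1) = 0 from rfl, zero_add, add_zero, mul_zero, zero_mul, mul_one, one_mul, sg_zero, sg_one] at hb1 hb2 hb3 hb4 hq1a hq1b hq1c hq1d hq1e hq1f hq2a hq2b hq2c ⊢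
    apply mul_left_cancel₀ h2
    linear_combination hb1 - hb2 - hb3 + hb4 + hq1a - hq1b - hq1c - hq1d - hq1e + hq1f + hq2a - hq2b + hq2c
  · -- case (0, 1, 0, 0)
    rw [block hBeven (hRhom _ _ x y hx hy _ z hz) hw (by decide),
      block hBeven (hRhom _ _ z w hz hw _ x hx) hy (by decide)]
    ring
  · -- case (0, 1, 0, 1)
    simp only [show ((1:ZMod 2)+1) = 0 from rfl, zero_add, add_zero, mul_zero, zero_mul, mul_one, one_mul, sg_zero, sg_one] at hb1 hb2 hb3 hb4 hq1a hq1b hq1c hq1d hq1e hq1f hq2a hq2b hq2c ⊢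
    apply mul_left_cancel₀ h2
    linear_combination hb1 + hb2 - hb3 + hb4 + hq1a - hq1b - hq1c + hq1d - hq1e + hq1f + hq2a - hq2b + hq2c
  · -- case (0, 1, 1, 0)
    simp only [show ((1:ZMod 2)+1) = 0 from rfl, zero_add, add_zero, mul_zero, zero_mul, mul_one, one_mul, sg_zero, sg_one] at hb1 hb2 hb3 hb4 hq1a hq1b hq1c hq1d hq1e hq1f hq2a hq2b hq2c ⊢
    apply mul_left_cancel₀ h2
    linear_combination hb1 + hb2 + hb3 + hb4 - hq1a - hq1b - hq1c + hq1d + hq1e - hq1f + hq2a + hq2b - hq2c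
  · -- case (0, 1, 1, 1)
    rw [block hBeven (hRhom _ _ x y hx hy _ z hz) hw (by decide),
      block hBeven (hRhom _ _ z w hz hw _ x hx) hy (by decide)]
    ring
  · -- case (1, 0, 0, 0)
    rw [block hBeven (hRhom _ _ x y hx hy _ z hz) hw (by decide),
      block hBeven (hRhom _ _ z w hz hw _ x hx) hy (by decide)]
    ring
  · -- case (1, 0, 0, 1)
    simp only [show ((1:ZMod 2)+1) = 0 from rfl, zero_add, add_zero, mul_zero, zero_mul, mul_one, one_mul, sg_zero, sg_one] at hb1 hb2 hb3 hb4 hq1a hq1b hq1c hq1d hq1e hq1f hq2a hq2b hq2c ⊢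
    apply mul_left_cancel₀ h2
    linear_combination hb1 - hb2 + hb3 - hb4 + hq1a - hq1b - hq1c + hq1d - hq1e + hq1f + hq2a - hq2b - hq2c
  · -- case (1, 0, 1, 0)
    simp only [show ((1:ZMod 2)+1) = 0 from rfl, zero_add, add_zero, mul_zero, zero_mul, mul_one, one_mul, sg_zero, sg_one] at hb1 hb2 hb3 hb4 hq1a hq1b hq1c hq1d hq1e hq1f hq2a hq2b hq2c ⊢
    apply mul_left_cancel₀ h2
    linear_combination hb1 - hb2 + hb3 - hb4 + hq1a - hq1b + hq1c + hq1d + hq1e - hq1f + hq2a - hq2b - hq2c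
  · -- case (1, 0, 1, 1)
    rw [block hBeven (hRhom _ _ x y hx hy _ z hz) hw (by decide),
      block hBeven (hRhom _ _ z w hz hw _ x hx) hy (by decide)]
    ring
  · -- case (1, 1, 0, 0)
    simp only [show ((1:ZMod 2)+1) = 0 from rfl, zero_add, add_zero, mul_zero, zero_mul, mul_one, one_mul, sg_zero, sg_one] at hb1 hb2 hb3 hb4 hq1a hq1b hq1c hq1d hq1e hq1f hq2a hq2b hq2c ⊢
    apply mul_left_cancel₀ h2
    linear_combination hb1 - hb2 + hb3 - hb4 + hq1a + hq1b + hq1c - hq1d + hq1e + hq1f + hq2a - hq2b - hq2c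
  · -- case (1, 1, 0, 1)
    rw [block hBeven (hRhom _ _ x y hx hy _ z hz) hw (by decide),
      block hBeven (hRhom _ _ z w hz hw _ x hx) hy (by decide)]
    ring
  · -- case (1, 1, 1, 0)
    rw [block hBeven (hRhom _ _ x y hx hy _ z hz) hw (by decide),
      block hBeven (hRhom _ _ z w hz hw _ x hx) hy (by decide)]
    ring
  · -- case (1, 1, 1, 1)
    simp only [show ((1:ZMod 2)+1) = 0 from rfl, zero_add, add_zero, mul_zero, zero_mul, mul_one, one_mul, sg_zero, sg_one] at hb1 hb2 hb3 hb4 hq1a hq1b hq1c hq1d hq1e hq1f hq2a hq2b hq2c ⊢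
    apply mul_left_cancel₀ h2
    linear_combination hb1 - hb2 + hb3 - hb4 - hq1a + hq1b - hq1c - hq1d - hq1e - hq1f + hq2a + hq2b - hq2c
set_option maxHeartbeats 2000000 in
lemma main_identity [FiniteDimensional k V] (h2 : (2 : k) ≠ 0)
    (S : SuperSpace k V) (B : V →ₗ[k] V →ₗ[k] k)
    (hsymm : ∀ (p q : ZMod 2) (x y : V), x ∈ S.part p → y ∈ S.part q →
      B x y = sg k (p * q) * B y x)
    (hBeven : (∀ x ∈ S.even, ∀ y ∈ S.odd, B x y = 0) ∧
      (∀ x ∈ S.odd, ∀ y ∈ S.even, B x y = 0))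
    (hnd : ∀ x : V, (∀ y, B x y = 0) → x = 0)
    (J : Module.End k V) (hJh : S.HomEnd 0 J) (hJ2 : J * J = -1)
    (hJiso : ∀ x y : V, B (J x) (J y) = B x y)
    (R : V →ₗ[k] V →ₗ[k] Module.End k V)
    (hskew : SuperSkew S R) (hB : Bianchi S R) (hRhom : HomCurv S 0 R)
    (hRu : ∀ (p q : ZMod 2) (x y : V), x ∈ S.part p → y ∈ S.part q →
      R x y * J = J * R x y ∧ ospCond S B (p + q) (R x y))
    {p : ZMod 2} {Y Z : V} (hY : Y ∈ S.part p) (hZ : Z ∈ S.part p) :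
    strE S (J * R (J Y) Z) = 2 * strE S (((R Y).flip Z) ∘ₗ twist S (sg k p)) := by
  classical
  obtain ⟨ι, hfin, b, d, π, hbmem, hdmem, hdual1, hdual0, hcomp, hdet, hstr⟩ :=
    exists_dualsys S B hsymm hBeven hnd
  have hosp : ∀ (pa qa : ZMod 2) (xa ya : V), xa ∈ S.part pa → ya ∈ S.part qa →
      ospCond S B (pa + qa) (R xa ya) := fun pa qa xa ya hxa hya =>
    (hRu pa qa xa ya hxa hya).2
  have hJmem : ∀ {q : ZMod 2} {v : V}, v ∈ S.part q → J v ∈ S.part q := by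
    intro q v hv
    have := hJh q v hv
    rwa [add_zero] at this
  have hJJ : ∀ v : V, J (J v) = -v := by
    intro v
    have := DFunLike.congr_fun hJ2 v
    simpa [Module.End.mul_apply] using this
  have hJskew : ∀ u v : V, B (J u) v = -B u (J v) := by
    intro u v
    have h1 : B (J u) (J (J v)) = B u (J v) := hJiso u (J v)
    rw [hJJ v, map_neg] at h1
    linear_combination -h1
  have hBJr : ∀ u v : V, B u (J v) = -B (J u) v := by
    intro u v
    rw [hJskew u v]; ring
  have hcomm : ∀ {pa qa : ZMod 2} {xa ya : V}, xa ∈ S.part pa → ya ∈ S.part qa →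
      ∀ v : V, R xa ya (J v) = J (R xa ya v) := by
    intro pa qa xa ya hxa hya v
    have h := (hRu pa qa xa ya hxa hya).1
    have := DFunLike.congr_fun h v
    simpa [Module.End.mul_apply] using this
  -- Termwise transformation of the left-hand side
  have hT : ∀ (q : ZMod 2) (bi di : V), bi ∈ S.part q → di ∈ S.part q →
      sg k q * B ((J * R (J Y) Z) bi) di
        = -(B (R Y (J di) (J bi)) Z) + sg k q * sg k (q * p) * B (R Y bi Z) di := by
    intro q bi di hbi hdi
    have e1 : B ((J * R (J Y) Z) bi) di = -(B (R (J Y) Z bi) (J di)) := by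
      rw [Module.End.mul_apply]; exact hJskew _ _
    have e2 : B (R (J Y) Z bi) (J di)
        = sg k ((p + p) * (q + q)) * B (R bi (J di) (J Y)) Z :=
      pairsym h2 S B hsymm hBeven R hskew hB hRhom hosp (hJmem hY) hZ hbi
        (hJmem hdi)
    have e3 : B (R bi (J di) (J Y)) Z = B (J (R bi (J di) Y)) Z := by
      rw [hcomm hbi (hJmem hdi) Y]
    have e4 : B (J (R bi (J di) Y)) Z = -(B (R bi (J di) Y) (J Z)) := hJskew _ _
    have e5 := b1pair S B R hB hbi (hJmem hdi) hY (J Z)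
    have e6 : B (R (J di) Y bi) (J Z) = -(sg k (q * p) * B (R Y (J di) bi) (J Z)) :=
      q2pair S B R hskew (hJmem hdi) hY bi (J Z)
    have e7 : B (R Y (J di) bi) (J Z) = -(B (J (R Y (J di) bi)) Z) := hBJr _ _
    have e8 : B (J (R Y (J di) bi)) Z = B (R Y (J di) (J bi)) Z := by
      rw [hcomm hY (hJmem hdi) bi]
    have e9 : B (R Y bi (J di)) (J Z) = B (R Y bi di) Z := by
      rw [hcomm hY hbi di, hJiso]
    have e10 := hosp p q Y bi hY hbi q di Z hdi
    have e11 : B di (R Y bi Z)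
        = sg k (q * (p + (0 + p + q))) * B (R Y bi Z) di :=
      hsymm q (p + (0 + p + q)) di (R Y bi Z) hdi (hRhom p q Y bi hY hbi p Z hZ)
    rcases zmod2_cases p with rfl | rfl <;> rcases zmod2_cases q with hq | hq <;>
      simp only [hq, show ((1:ZMod 2)+1) = 0 from rfl, zero_add, add_zero, mul_zero,
        zero_mul, mul_one, one_mul, sg_zero, sg_one]
        at e1 e2 e3 e4 e5 e6 e7 e8 e9 e10 e11 ⊢
    · linear_combination e1 - e2 - e3 - e4 + e5 - e6 + e7 - e8 - e9 - e10 + e11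
    · linear_combination - e1 + e2 + e3 + e4 - e5 - e6 + e7 - e8 + e9 + e10 + e11
    · linear_combination e1 - e2 - e3 - e4 + e5 - e6 + e7 - e8 - e9 - e10 + e11
    · linear_combination - e1 + e2 + e3 + e4 - e5 + e6 + e7 - e8 + e9 + e10 - e11
  -- Termwise transformation used after the sum swap
  have hT2 : ∀ (q : ZMod 2) (bi di : V), bi ∈ S.part q → di ∈ S.part q →
      -(sg k q * B (R Y bi di) Z) = sg k q * sg k (q * p) * B (R Y bi Z) di := by
    intro q bi di hbi hdi
    have e10 := hosp p q Y bi hY hbi q di Z hdi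
    have e11 : B di (R Y bi Z)
        = sg k (q * (p + (0 + p + q))) * B (R Y bi Z) di :=
      hsymm q (p + (0 + p + q)) di (R Y bi Z) hdi (hRhom p q Y bi hY hbi p Z hZ)
    rcases zmod2_cases p with rfl | rfl <;> rcases zmod2_cases q with hq | hq <;>
      simp only [hq, show ((1:ZMod 2)+1) = 0 from rfl, zero_add, add_zero, mul_zero,
        zero_mul, mul_one, one_mul, sg_zero, sg_one] at e10 e11 ⊢
    · linear_combination - e10 + e11
    · linear_combination e10 + e11
    · linear_combination - e10 + e11
    · linear_combination e10 - e11
  -- the right-hand side integrand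
  have hRHS : ∀ i, sg k (π i) * B ((((R Y).flip Z) ∘ₗ twist S (sg k p)) (b i)) (d i)
      = sg k (π i) * sg k (π i * p) * B (R Y (b i) Z) (d i) := by
    intro i
    rcases zmod2_cases (π i) with hq | hq
    · rw [LinearMap.comp_apply,
        twist_apply_even S _ (by rw [← part_zero S, ← hq]; exact hbmem i)]
      rw [hq, show ((0:ZMod 2) * p) = 0 by rw [zero_mul], sg_zero]
      rw [LinearMap.flip_apply]
      ring
    · rw [LinearMap.comp_apply,
        twist_apply_odd S _ (by rw [← part_one S, ← hq]; exact hbmem i)]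
      rw [hq, show ((1:ZMod 2) * p) = p by rw [one_mul]]
      rw [map_smul, map_smul, LinearMap.smul_apply, smul_eq_mul,
        LinearMap.flip_apply]
      ring
  -- the bilinear form u v ↦ B (R Y v u) Z
  let Φ : V →ₗ[k] V →ₗ[k] k :=
    LinearMap.compr₂ (LinearMap.flip (R Y : V →ₗ[k] V →ₗ[k] V)) (B.flip Z)
  have hΦ : ∀ u v : V, Φ u v = B (R Y v u) Z := fun u v => rfl
  -- sum swaps
  have hdual : ∀ i j, B (b j) (d i) = if j = i then 1 else 0 := by
    intro i j
    by_cases h : j = i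
    · subst h; rw [if_pos rfl]; exact hdual1 j
    · rw [if_neg h]; exact hdual0 i j (fun hh => h (by rw [hh]))
  have hpp : ∀ r : ZMod 2, r * r = r := by decide
  have hsg2 : ∀ r : ZMod 2, sg k r * sg k r = 1 := by
    intro r; rcases zmod2_cases r with rfl | rfl <;> simp [sg_zero, sg_one]
  have hdet' : ∀ u : V, (∀ j, B (J (b j)) u = 0) → u = 0 := by
    intro u hu
    have hJu : J u = 0 := by
      apply sepR hsymm hBeven hnd
      intro x
      conv_lhs => rw [hcomp x]
      rw [map_sum, LinearMap.sum_apply]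
      apply Finset.sum_eq_zero
      intro j _
      have hb := hJskew (b j) u
      rw [hu j] at hb
      have hbju : B (b j) (J u) = 0 := by linear_combination hb
      rw [map_smul, LinearMap.smul_apply, smul_eq_mul, hbju, mul_zero]
    have hneg := hJJ u
    rw [hJu, map_zero] at hneg
    exact neg_eq_zero.mp hneg.symm
  have hdual' : ∀ i j, B (J (b j)) (J (d i)) = if j = i then 1 else 0 := by
    intro i j; rw [hJiso]; exact hdual i j
  have S1 : ∑ i, Φ (J (b i)) (J (d i)) = ∑ i, Φ (b i) (d i) :=
    sum_swap B Φ b d (fun i => J (b i)) (fun i => J (d i)) hcomp hdual' hdet'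
  have hdual'' : ∀ i j, B (d j) (sg k (π i) • b i) = if j = i then 1 else 0 := by
    intro i j
    rw [map_smul, smul_eq_mul,
      hsymm (π j) (π i) (d j) (b i) (hdmem j) (hbmem i)]
    by_cases h : j = i
    · subst h
      rw [if_pos rfl, hpp, hdual1, mul_one]
      exact hsg2 (π j)
    · rw [if_neg h, hdual0 j i h]
      ring
  have S2 : ∑ i, Φ (d i) (sg k (π i) • b i) = ∑ i, Φ (b i) (d i) :=
    sum_swap B Φ b d d (fun i => sg k (π i) • b i) hcomp hdual'' hdet
  have hR : ∑ i, sg k (π i) * B ((((R Y).flip Z) ∘ₗ twist S (sg k p)) (b i)) (d i)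
      = ∑ i, sg k (π i) * sg k (π i * p) * B (R Y (b i) Z) (d i) :=
    Finset.sum_congr rfl (fun i _ => hRHS i)
  rw [hstr (J * R (J Y) Z), hstr (((R Y).flip Z) ∘ₗ twist S (sg k p)), hR]
  calc ∑ i, sg k (π i) * B ((J * R (J Y) Z) (b i)) (d i)
      = ∑ i, (-(Φ (J (b i)) (J (d i)))
          + sg k (π i) * sg k (π i * p) * B (R Y (b i) Z) (d i)) := by
        apply Finset.sum_congr rfl
        intro i _
        rw [hΦ]
        exact hT (π i) (b i) (d i) (hbmem i) (hdmem i)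
    _ = -(∑ i, Φ (J (b i)) (J (d i)))
          + ∑ i, sg k (π i) * sg k (π i * p) * B (R Y (b i) Z) (d i) := by
        rw [Finset.sum_add_distrib]
        congr 1
        rw [← Finset.sum_neg_distrib]
    _ = -(∑ i, Φ (d i) (sg k (π i) • b i))
          + ∑ i, sg k (π i) * sg k (π i * p) * B (R Y (b i) Z) (d i) := by
        rw [S1, ← S2]
    _ = (∑ i, sg k (π i) * sg k (π i * p) * B (R Y (b i) Z) (d i))
          + ∑ i, sg k (π i) * sg k (π i * p) * B (R Y (b i) Z) (d i) := by
        congr 1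
        rw [← Finset.sum_neg_distrib]
        apply Finset.sum_congr rfl
        intro i _
        have h := hT2 (π i) (b i) (d i) (hbmem i) (hdmem i)
        rw [map_smul, hΦ, smul_eq_mul]
        linear_combination h
    _ = 2 * ∑ i, sg k (π i) * sg k (π i * p) * B (R Y (b i) Z) (d i) := by
        rw [two_mul]

end Aux

/-- in the Kähler super setting, an even algebraic curvature tensor `R` of
type `u` takes values in `su = {ξ ∈ u : str(J∘ξ) = 0}` if and only if `Ric(R) = 0`, where
`Ric(R)(Y,Z) = str(X ↦ (−1)^{|X||Z|} R(Y,X)Z)`. -/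
theorem su_valued_iff_ricci_flat {k V : Type*} [Field k] [AddCommGroup V] [Module k V]
    [FiniteDimensional k V] (h2 : (2 : k) ≠ 0)
    (S : SuperSpace k V) (B : V →ₗ[k] V →ₗ[k] k)
    (hsymm : ∀ (p q : ZMod 2) (x y : V), x ∈ S.part p → y ∈ S.part q →
      B x y = sg k (p * q) * B y x)
    (hBeven : (∀ x ∈ S.even, ∀ y ∈ S.odd, B x y = 0) ∧
      (∀ x ∈ S.odd, ∀ y ∈ S.even, B x y = 0))
    (hnd : ∀ x : V, (∀ y, B x y = 0) → x = 0)
    (J : Module.End k V) (hJh : S.HomEnd 0 J) (hJ2 : J * J = -1)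
    (hJiso : ∀ x y : V, B (J x) (J y) = B x y)
    (R : V →ₗ[k] V →ₗ[k] Module.End k V)
    (hskew : SuperSkew S R) (hB : Bianchi S R) (hRhom : HomCurv S 0 R)
    (hRu : ∀ (p q : ZMod 2) (x y : V), x ∈ S.part p → y ∈ S.part q →
      R x y * J = J * R x y ∧ ospCond S B (p + q) (R x y)) :
    (∀ (p q : ZMod 2) (x y : V), x ∈ S.part p → y ∈ S.part q →
        strE S (J * R x y) = 0) ↔
    (∀ (pY pZ : ZMod 2) (Y Z : V), Y ∈ S.part pY → Z ∈ S.part pZ →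
        strE S (((R Y).flip Z) ∘ₗ twist S (sg k pZ)) = 0) := by
  classical
  obtain ⟨ι, hfin, b, d, π, hbmem, hdmem, hdual1, hdual0, hcomp, hdet, hstr⟩ :=
    exists_dualsys S B hsymm hBeven hnd
  have hJmem : ∀ {q : ZMod 2} {v : V}, v ∈ S.part q → J v ∈ S.part q := by
    intro q v hv
    have := hJh q v hv
    rwa [add_zero] at this
  have hJJ : ∀ v : V, J (J v) = -v := by
    intro v
    have := DFunLike.congr_fun hJ2 v
    simpa [Module.End.mul_apply] using this
  constructor
  · intro H pY pZ Y Z hY hZ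
    by_cases hp : pY = pZ
    · subst hp
      have hid := main_identity h2 S B hsymm hBeven hnd J hJh hJ2 hJiso R hskew
        hB hRhom hRu hY hZ
      have h0 : strE S (J * R (J Y) Z) = 0 := H pY pY (J Y) Z (hJmem hY) hZ
      rw [hid] at h0
      rcases mul_eq_zero.mp h0 with h | h
      · exact absurd h h2
      · exact h
    · rw [hstr]
      apply Finset.sum_eq_zero
      intro i _
      have hmem : R Y (b i) Z ∈ S.part (pZ + (0 + pY + π i)) :=
        hRhom pY (π i) Y (b i) hY (hbmem i) pZ Z hZ
      have hne : pZ + (0 + pY + π i) ≠ π i := by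
        rcases zmod2_cases pY with rfl | rfl <;> rcases zmod2_cases pZ with rfl | rfl <;>
          rcases zmod2_cases (π i) with h | h <;>
          first
          | exact absurd rfl hp
          | (rw [h]; decide)
      rcases zmod2_cases (π i) with hq | hq
      · rw [LinearMap.comp_apply,
          twist_apply_even S _ (by rw [← part_zero S, ← hq]; exact hbmem i),
          LinearMap.flip_apply, block hBeven hmem (hdmem i) hne, mul_zero]
      · rw [LinearMap.comp_apply,
          twist_apply_odd S _ (by rw [← part_one S, ← hq]; exact hbmem i),
          map_smul, map_smul, LinearMap.smul_apply, smul_eq_mul,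
          LinearMap.flip_apply, block hBeven hmem (hdmem i) hne, mul_zero, mul_zero]
  · intro H p q x y hx hy
    by_cases hp : p = q
    · subst hp
      have hY : -(J x) ∈ S.part p := neg_mem (hJmem hx)
      have hJY : J (-(J x)) = x := by rw [map_neg, hJJ, neg_neg]
      have hid := main_identity h2 S B hsymm hBeven hnd J hJh hJ2 hJiso R hskew
        hB hRhom hRu hY hy
      rw [hJY] at hid
      rw [hid, H p p (-(J x)) y hY hy, mul_zero]
    · rw [hstr]
      apply Finset.sum_eq_zero
      intro i _
      have hA : R x y (b i) ∈ S.part (π i + (0 + p + q)) :=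
        hRhom p q x y hx hy (π i) (b i) (hbmem i)
      have hm : (J * R x y) (b i) ∈ S.part (π i + (0 + p + q)) := by
        rw [Module.End.mul_apply]; exact hJmem hA
      have hne : π i + (0 + p + q) ≠ π i := by
        rcases zmod2_cases p with rfl | rfl <;> rcases zmod2_cases q with rfl | rfl <;>
          rcases zmod2_cases (π i) with h | h <;>
          first
          | exact absurd rfl hp
          | (rw [h]; decide)
      rw [block hBeven hm (hdmem i) hne, mul_zero]
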